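/- Let R be a Noetherian commutative ring with breadth at most n. Then every ideal of R is generated by at most n elements: for every ideal I of R there is a finite set S ⊆ R with |S| ≤ n generating I. -/
import Mathlib


/-- In a Noetherian commutative ring of breadth at most `n`, every ideal is generated by
at most `n` elements. -/
theorem ideal_generated_by_le_of_breadth_le {R : Type*} [CommRing R] [IsNoetherianRing R]
    (n : ℕ)
    (hbr : ∀ y : Fin (n + 1) → R, ∃ i,
      Ideal.span (y '' {j | j ≠ i}) = Ideal.span (Set.range y))
    (I : Ideal R) :
    ∃ S : Finset R, S.card ≤ n ∧ Ideal.span (S : Set R) = I := by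
  obtain ⟨S, hS⟩ := IsNoetherian.noetherian I
  suffices h : ∀ S : Finset R, ∃ T : Finset R, T.card ≤ n ∧
      Ideal.span (T : Set R) = Ideal.span (S : Set R) by
    obtain ⟨T, h1, h2⟩ := h S
    exact ⟨T, h1, h2.trans hS⟩
  classical
  intro S
  induction S using Finset.strongInduction with
  | _ S ih =>
    by_cases hc : S.card ≤ n
    · exact ⟨S, hc, rfl⟩
    · push_neg at hc
      obtain ⟨U, hUS, hU⟩ := Finset.exists_subset_card_eq (Nat.succ_le_of_lt hc)
      set y : Fin (n + 1) → R := fun i => ((Finset.equivFinOfCardEq hU).symm i : R) with hy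
      have hyinj : Function.Injective y := fun a b hab =>
        (Finset.equivFinOfCardEq hU).symm.injective (Subtype.ext hab)
      have hymem : ∀ i, y i ∈ S := fun i => hUS ((Finset.equivFinOfCardEq hU).symm i).2
      obtain ⟨i, hi⟩ := hbr y
      have hsub : y '' {j | j ≠ i} ⊆ ((S.erase (y i) : Finset R) : Set R) := by
        rintro _ ⟨j, hj, rfl⟩
        exact Finset.mem_coe.mpr (Finset.mem_erase.mpr ⟨fun h => hj (hyinj h), hymem j⟩)
      have hyi : y i ∈ Ideal.span ((S.erase (y i) : Finset R) : Set R) := by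
        have h1 : y i ∈ Ideal.span (y '' {j | j ≠ i}) := by
          rw [hi]; exact Ideal.subset_span ⟨i, rfl⟩
        exact Ideal.span_mono hsub h1
      have hspan : Ideal.span ((S.erase (y i) : Finset R) : Set R) = Ideal.span (S : Set R) := by
        conv_rhs => rw [← Finset.insert_erase (hymem i)]
        rw [Finset.coe_insert]; exact (Submodule.span_insert_eq_span hyi).symm
      obtain ⟨T, h1, h2⟩ := ih (S.erase (y i)) (Finset.erase_ssubset (hymem i))
      exact ⟨T, h1, h2.trans hspan⟩
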